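/- The directional derivative of Q ↦ I_Q(T:X|Y) at Q in the direction γ_{t;x,x';y,y'} = δ_{t,x,y} + δ_{t,x',y'} − δ_{t,x,y'} − δ_{t,x',y} equals log( Q(t|x,y)·Q(t|x',y') / (Q(t|x,y')·Q(t|x',y)) ), provided all four conditional probabilities are positive. -/

import Mathlib

open scoped BigOperators
noncomputable section

variable {T X Y : Type*}

/-- A joint probability distribution of `(T,X,Y)`, as a function `T → X → Y → ℝ`. -/
def IsDist [Fintype T] [Fintype X] [Fintype Y] (P : T → X → Y → ℝ) : Prop :=
  (∀ t x y, 0 ≤ P t x y) ∧ ∑ t, ∑ x, ∑ y, P t x y = 1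

/-- The `(T,X)`-marginal. -/
def margTX [Fintype Y] (P : T → X → Y → ℝ) (t : T) (x : X) : ℝ := ∑ y, P t x y

/-- The `(T,Y)`-marginal. -/
def margTY [Fintype X] (P : T → X → Y → ℝ) (t : T) (y : Y) : ℝ := ∑ x, P t x y

/-- The `(X,Y)`-marginal. -/
def margXY [Fintype T] (P : T → X → Y → ℝ) (x : X) (y : Y) : ℝ := ∑ t, P t x y

/-- The `T`-marginal. -/
def margT [Fintype X] [Fintype Y] (P : T → X → Y → ℝ) (t : T) : ℝ := ∑ x, ∑ y, P t x y

/-- The `Y`-marginal. -/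
def margY [Fintype T] [Fintype X] (P : T → X → Y → ℝ) (y : Y) : ℝ := ∑ t, ∑ x, P t x y

/-- `Δ_P`: the polytope of joint distributions with the same `(T,X)`- and
`(T,Y)`-marginals as `P`. -/
def deltaP [Fintype T] [Fintype X] [Fintype Y] (P : T → X → Y → ℝ) :
    Set (T → X → Y → ℝ) :=
  {Q | IsDist Q ∧ (∀ t x, margTX Q t x = margTX P t x) ∧
    (∀ t y, margTY Q t y = margTY P t y)}

/-- The conditional entropy `H_Q(T|X,Y)` (with the convention `0 log 0 = 0`,
automatic since `Real.log 0 = 0`). -/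
def condEntTXY [Fintype T] [Fintype X] [Fintype Y] (Q : T → X → Y → ℝ) : ℝ :=
  ∑ t, ∑ x, ∑ y, -(Q t x y * Real.log (Q t x y / margXY Q x y))

/-- The conditional mutual information `I_Q(T:X|Y)`. -/
def CMI [Fintype T] [Fintype X] [Fintype Y] (Q : T → X → Y → ℝ) : ℝ :=
  ∑ t, ∑ x, ∑ y,
    Q t x y * Real.log (Q t x y * margY Q y / (margTY Q t y * margXY Q x y))

/-- `γ_{t;x,x';y,y'} = δ_{t,x,y} + δ_{t,x',y'} − δ_{t,x,y'} − δ_{t,x',y}`. -/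
def gam [DecidableEq T] [DecidableEq X] [DecidableEq Y]
    (t : T) (x x' : X) (y y' : Y) : T → X → Y → ℝ := fun s u v =>
  (if s = t ∧ u = x ∧ v = y then (1 : ℝ) else 0) +
    (if s = t ∧ u = x' ∧ v = y' then 1 else 0) -
    (if s = t ∧ u = x ∧ v = y' then 1 else 0) -
    (if s = t ∧ u = x' ∧ v = y then 1 else 0)

/-! ### Auxiliary lemmas -/

lemma margXY_gam [Fintype T] [DecidableEq T] [DecidableEq X] [DecidableEq Y]
    (t : T) (x x' : X) (y y' : Y) (u : X) (v : Y) :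
    margXY (gam t x x' y y') u v =
      ((if u = x ∧ v = y then (1:ℝ) else 0) + (if u = x' ∧ v = y' then 1 else 0)
        - (if u = x ∧ v = y' then 1 else 0) - (if u = x' ∧ v = y then 1 else 0)) := by
  simp [gam, margXY, Finset.sum_add_distrib, Finset.sum_sub_distrib, ite_and,
    Finset.sum_ite_eq']

lemma margTY_gam [Fintype X] [DecidableEq T] [DecidableEq X] [DecidableEq Y]
    (t : T) (x x' : X) (y y' : Y) (s : T) (v : Y) :
    margTY (gam t x x' y y') s v = 0 := by
  by_cases hs : s = t <;> by_cases hy : v = y <;> by_cases hy' : v = y' <;>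
    simp [gam, margTY, Finset.sum_add_distrib, Finset.sum_sub_distrib, ite_and, hs, hy, hy',
      Finset.sum_ite_eq']

lemma margY_gam [Fintype T] [Fintype X] [DecidableEq T] [DecidableEq X] [DecidableEq Y]
    (t : T) (x x' : X) (y y' : Y) (v : Y) :
    margY (gam t x x' y y') v = 0 := by
  have : margY (gam t x x' y y') v = ∑ s, margTY (gam t x x' y y') s v := rfl
  simp [this, margTY_gam]

lemma margXY_add' [Fintype T] (Q G : T → X → Y → ℝ) (ε : ℝ) (u : X) (v : Y) :
    margXY (fun s u v => Q s u v + ε * G s u v) u v = margXY Q u v + ε * margXY G u v := by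
  simp [margXY, Finset.sum_add_distrib, Finset.mul_sum]

lemma margTY_add' [Fintype X] (Q G : T → X → Y → ℝ) (ε : ℝ) (s : T) (v : Y) :
    margTY (fun s u v => Q s u v + ε * G s u v) s v = margTY Q s v + ε * margTY G s v := by
  simp [margTY, Finset.sum_add_distrib, Finset.mul_sum]

lemma margY_add' [Fintype T] [Fintype X] (Q G : T → X → Y → ℝ) (ε : ℝ) (v : Y) :
    margY (fun s u v => Q s u v + ε * G s u v) v = margY Q v + ε * margY G v := by
  simp [margY, Finset.sum_add_distrib, Finset.mul_sum]

lemma sum_delta3 [Fintype T] [Fintype X] [Fintype Y]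
    [DecidableEq T] [DecidableEq X] [DecidableEq Y]
    (t : T) (x : X) (y : Y) (L : T → X → Y → ℝ) :
    ∑ s, ∑ u, ∑ v, (if s = t ∧ u = x ∧ v = y then (1:ℝ) else 0) * L s u v = L t x y := by
  simp [ite_and, Finset.sum_ite_eq', ite_mul]

lemma sum_delta2 [Fintype X] [Fintype Y] [DecidableEq X] [DecidableEq Y]
    (x : X) (y : Y) (f : X → Y → ℝ) :
    ∑ u, ∑ v, (if u = x ∧ v = y then f u v else 0) = f x y := by
  simp [ite_and, Finset.sum_ite_eq']

lemma hasDerivAt_term (q c K k2 M d : ℝ) (hq : 0 < q) (hM : 0 < M) (hK : 0 < K)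
    (hk2 : 0 < k2) :
    HasDerivAt (fun ε : ℝ => (q + ε * c) * Real.log ((q + ε * c) * K / (k2 * (M + ε * d))))
      (c * Real.log (q * K / (k2 * M)) + c - q * d / M) 0 := by
  have hp : HasDerivAt (fun ε : ℝ => q + ε * c) c 0 := by
    simpa using ((hasDerivAt_id (0:ℝ)).mul_const c).const_add q
  have hm : HasDerivAt (fun ε : ℝ => M + ε * d) d 0 := by
    simpa using ((hasDerivAt_id (0:ℝ)).mul_const d).const_add M
  have hnum : HasDerivAt (fun ε : ℝ => (q + ε * c) * K) (c * K) 0 := hp.mul_const K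
  have hden : HasDerivAt (fun ε : ℝ => k2 * (M + ε * d)) (k2 * d) 0 := hm.const_mul k2
  have hden0 : k2 * (M + 0 * d) ≠ 0 := by
    simp only [zero_mul, add_zero]; positivity
  have hg : HasDerivAt (fun ε : ℝ => (q + ε * c) * K / (k2 * (M + ε * d)))
      ((c * K * (k2 * (M + 0 * d)) - (q + 0 * c) * K * (k2 * d)) / (k2 * (M + 0 * d))^2) 0 :=
    hnum.div hden hden0
  have hg0 : (q + 0 * c) * K / (k2 * (M + 0 * d)) ≠ 0 := by
    simp only [zero_mul, add_zero]; positivity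
  have hlog := (Real.hasDerivAt_log hg0).comp 0 hg
  have hfull : HasDerivAt (fun ε : ℝ => (q + ε * c) * Real.log ((q + ε * c) * K / (k2 * (M + ε * d)))) _ 0 :=
    hp.mul hlog
  convert hfull using 1
  simp only [zero_mul, add_zero] at *
  field_simp
  ring

/-- The directional derivative of `Q ↦ I_Q(T:X|Y)` at `Q` in direction
`γ_{t;x,x';y,y'}` equals
`log (Q(t|x,y) Q(t|x',y') / (Q(t|x,y') Q(t|x',y)))`, provided the four joint
probabilities are positive. -/
theorem CMI_directional_derivative [Fintype T] [Fintype X] [Fintype Y]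
    [DecidableEq T] [DecidableEq X] [DecidableEq Y]
    (Q : T → X → Y → ℝ) (hQ : IsDist Q)
    (t : T) (x x' : X) (y y' : Y)
    (h1 : 0 < Q t x y) (h2 : 0 < Q t x' y') (h3 : 0 < Q t x y') (h4 : 0 < Q t x' y) :
    HasDerivAt (fun ε : ℝ => CMI (fun s u v => Q s u v + ε * gam t x x' y y' s u v))
      (Real.log ((Q t x y / margXY Q x y) * (Q t x' y' / margXY Q x' y') /
        ((Q t x y' / margXY Q x y') * (Q t x' y / margXY Q x' y)))) 0 := by
  obtain ⟨hpos, -⟩ := hQ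
  set G := gam t x x' y y' with hG
  -- marginal bounds
  have hMle : ∀ s u v, Q s u v ≤ margXY Q u v := fun s u v =>
    Finset.single_le_sum (fun s' _ => hpos s' u v) (Finset.mem_univ s)
  have hk2le : ∀ s u v, Q s u v ≤ margTY Q s v := fun s u v =>
    Finset.single_le_sum (fun u' _ => hpos s u' v) (Finset.mem_univ u)
  have hKle : ∀ (s : T) (u : X) (v : Y), Q s u v ≤ margY Q v := by
    intro s u v
    calc Q s u v ≤ ∑ u', Q s u' v :=
          Finset.single_le_sum (fun u' _ => hpos s u' v) (Finset.mem_univ u)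
      _ ≤ margY Q v :=
          Finset.single_le_sum (f := fun s' => ∑ u', Q s' u' v)
            (fun s' _ => Finset.sum_nonneg fun u' _ => hpos s' u' v) (Finset.mem_univ s)
  -- rewrite the function
  have Feq : (fun ε : ℝ => CMI fun s u v => Q s u v + ε * G s u v) =
      fun ε : ℝ => ∑ s, ∑ u, ∑ v, (Q s u v + ε * G s u v) *
        Real.log ((Q s u v + ε * G s u v) * margY Q v /
          (margTY Q s v * (margXY Q u v + ε * margXY G u v))) := by
    funext ε
    unfold CMI
    refine Finset.sum_congr rfl fun s _ => Finset.sum_congr rfl fun u _ =>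
      Finset.sum_congr rfl fun v _ => ?_
    simp only [margY_add', margTY_add', margXY_add', hG, margY_gam, margTY_gam, mul_zero,
      add_zero]
  rw [Feq]
  -- derivative of each term
  have key : HasDerivAt
      (fun ε : ℝ => ∑ s, ∑ u, ∑ v, (Q s u v + ε * G s u v) *
        Real.log ((Q s u v + ε * G s u v) * margY Q v /
          (margTY Q s v * (margXY Q u v + ε * margXY G u v))))
      (∑ s, ∑ u, ∑ v, (G s u v *
          Real.log (Q s u v * margY Q v / (margTY Q s v * margXY Q u v))
        + G s u v - Q s u v * margXY G u v / margXY Q u v)) 0 := by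
    refine HasDerivAt.fun_sum fun s _ => HasDerivAt.fun_sum fun u _ => HasDerivAt.fun_sum fun v _ => ?_
    by_cases hq : Q s u v = 0
    · have c1 : ¬(s = t ∧ u = x ∧ v = y) := by rintro ⟨rfl, rfl, rfl⟩; exact (ne_of_gt h1) hq
      have c2 : ¬(s = t ∧ u = x' ∧ v = y') := by rintro ⟨rfl, rfl, rfl⟩; exact (ne_of_gt h2) hq
      have c3 : ¬(s = t ∧ u = x ∧ v = y') := by rintro ⟨rfl, rfl, rfl⟩; exact (ne_of_gt h3) hq
      have c4 : ¬(s = t ∧ u = x' ∧ v = y) := by rintro ⟨rfl, rfl, rfl⟩; exact (ne_of_gt h4) hq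
      have hc : G s u v = 0 := by simp [hG, gam, c1, c2, c3, c4]
      simp only [hq, hc, mul_zero, zero_mul, add_zero, zero_add, sub_zero, zero_sub,
        zero_div, neg_zero]
      exact hasDerivAt_const 0 0
    · have hq' : 0 < Q s u v := lt_of_le_of_ne (hpos s u v) (Ne.symm hq)
      exact hasDerivAt_term _ _ _ _ _ _ hq' (lt_of_lt_of_le hq' (hMle s u v))
        (lt_of_lt_of_le hq' (hKle s u v)) (lt_of_lt_of_le hq' (hk2le s u v))
  -- compute the sum of derivatives
  have hMxy : 0 < margXY Q x y := lt_of_lt_of_le h1 (hMle t x y)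
  have hMxy' : 0 < margXY Q x y' := lt_of_lt_of_le h3 (hMle t x y')
  have hMx'y : 0 < margXY Q x' y := lt_of_lt_of_le h4 (hMle t x' y)
  have hMx'y' : 0 < margXY Q x' y' := lt_of_lt_of_le h2 (hMle t x' y')
  have hsum : (∑ s, ∑ u, ∑ v, (G s u v *
          Real.log (Q s u v * margY Q v / (margTY Q s v * margXY Q u v))
        + G s u v - Q s u v * margXY G u v / margXY Q u v)) =
      Real.log ((Q t x y / margXY Q x y) * (Q t x' y' / margXY Q x' y') /
        ((Q t x y' / margXY Q x y') * (Q t x' y / margXY Q x' y))) := by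
    set L : T → X → Y → ℝ := fun s u v =>
      Real.log (Q s u v * margY Q v / (margTY Q s v * margXY Q u v)) with hL
    have hA : ∑ s, ∑ u, ∑ v, G s u v * L s u v
        = L t x y + L t x' y' - L t x y' - L t x' y := by
      simp only [hG, gam, add_mul, sub_mul, Finset.sum_add_distrib, Finset.sum_sub_distrib,
        sum_delta3]
    have hB : ∑ s, ∑ u, ∑ v, G s u v = (0:ℝ) := by
      simp [hG, gam, Finset.sum_add_distrib, Finset.sum_sub_distrib, ite_and,
        Finset.sum_ite_eq']
    have hC : ∑ s, ∑ u, ∑ v, Q s u v * margXY G u v / margXY Q u v = 0 := by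
      have swap : ∑ s, ∑ u, ∑ v, Q s u v * margXY G u v / margXY Q u v
          = ∑ u, ∑ v, margXY Q u v * margXY G u v / margXY Q u v := by
        rw [Finset.sum_comm]
        refine Finset.sum_congr rfl fun u _ => ?_
        rw [Finset.sum_comm]
        refine Finset.sum_congr rfl fun v _ => ?_
        simp [margXY, Finset.sum_mul, Finset.sum_div]
      rw [swap]
      simp only [hG, margXY_gam, mul_add, mul_sub, add_div, sub_div,
        Finset.sum_add_distrib, Finset.sum_sub_distrib, mul_ite, mul_one, mul_zero,
        ite_div, zero_div, sum_delta2]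
      rw [div_self hMxy.ne', div_self hMxy'.ne', div_self hMx'y.ne', div_self hMx'y'.ne']
      ring
    have split : (∑ s, ∑ u, ∑ v, (G s u v * L s u v
          + G s u v - Q s u v * margXY G u v / margXY Q u v))
        = (∑ s, ∑ u, ∑ v, G s u v * L s u v) + (∑ s, ∑ u, ∑ v, G s u v)
          - ∑ s, ∑ u, ∑ v, Q s u v * margXY G u v / margXY Q u v := by
      simp [Finset.sum_add_distrib, Finset.sum_sub_distrib]
    rw [split, hA, hB, hC]
    -- now expand logs
    have lexp : ∀ (s : T) (u : X) (v : Y), 0 < Q s u v →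
        L s u v = Real.log (Q s u v) + Real.log (margY Q v)
          - Real.log (margTY Q s v) - Real.log (margXY Q u v) := by
      intro s u v h
      have hM : 0 < margXY Q u v := lt_of_lt_of_le h (hMle s u v)
      have hk2 : 0 < margTY Q s v := lt_of_lt_of_le h (hk2le s u v)
      have hK : 0 < margY Q v := lt_of_lt_of_le h (hKle s u v)
      simp only [hL]
      rw [Real.log_div (by positivity) (by positivity), Real.log_mul h.ne' hK.ne',
        Real.log_mul hk2.ne' hM.ne']
      ring
    rw [lexp t x y h1, lexp t x' y' h2, lexp t x y' h3, lexp t x' y h4]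
    rw [Real.log_div (by positivity) (by positivity),
      Real.log_mul (by positivity) (by positivity),
      Real.log_mul (by positivity) (by positivity),
      Real.log_div h1.ne' hMxy.ne', Real.log_div h2.ne' hMx'y'.ne',
      Real.log_div h3.ne' hMxy'.ne', Real.log_div h4.ne' hMx'y.ne']
    ring
  exact hsum ▸ key
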